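/- Let a, b : H × H → ℝ be symmetric bilinear forms on a real inner product space H with a(v, v) ≥ 0 and suppose c₀ a(v, v) ≤ s(v, v) ≤ c₁ a(v, v) for all v in a subspace K, where s is a symmetric positive semidefinite bilinear form and 0 < c₀ ≤ c₁. Define a^h(u, v) := a(Πu, Πv) + s((I − Π)u, (I − Π)v), where Π : H → H is a projection (Π² = Π) onto a subspace P with (I − Π)H ⊆ K and a(Πu, (I−Π)v) = 0 for all u, v. Then min(1, c₀) a(v, v) ≤ a^h(v, v) ≤ max(1, c₁) a(v, v) for all v ∈ H. -/
import Mathlib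


/-- Stability of the VEM discrete bilinear form: if `s` is a stabilization satisfying a
two-sided bound by `a` on the kernel `K ⊇ range (I - Proj)` of the `a`-orthogonal projection
`Proj`, then `a^h(v,v) := a(Projv,Projv) + s((I-Proj)v,(I-Proj)v)` satisfies
`min 1 c₀ · a(v,v) ≤ a^h(v,v) ≤ max 1 c₁ · a(v,v)`. -/
theorem vem_stability {H : Type*} [AddCommGroup H] [Module ℝ H]
    (a s : H →ₗ[ℝ] H →ₗ[ℝ] ℝ) (K : Submodule ℝ H) (Proj : H →ₗ[ℝ] H)
    (c₀ c₁ : ℝ) (hc₀ : 0 < c₀) (hc₀₁ : c₀ ≤ c₁)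
    (ha_sym : ∀ u v, a u v = a v u) (ha_pos : ∀ v, 0 ≤ a v v)
    (hs_sym : ∀ u v, s u v = s v u) (hs_pos : ∀ v, 0 ≤ s v v)
    (hproj : ∀ v, Proj (Proj v) = Proj v)
    (hker : ∀ v, v - Proj v ∈ K)
    (horth : ∀ u v, a (Proj u) (v - Proj v) = 0)
    (hlow : ∀ v ∈ K, c₀ * a v v ≤ s v v) (hupp : ∀ v ∈ K, s v v ≤ c₁ * a v v) :
    ∀ v, min 1 c₀ * a v v ≤ a (Proj v) (Proj v) + s (v - Proj v) (v - Proj v) ∧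
      a (Proj v) (Proj v) + s (v - Proj v) (v - Proj v) ≤ max 1 c₁ * a v v := by
  intro v
  have hcross : a (Proj v) (v - Proj v) = 0 := horth v v
  have hcross' : a (v - Proj v) (Proj v) = 0 := by rw [ha_sym]; exact hcross
  have hdecomp : a v v = a (Proj v) (Proj v) + a (v - Proj v) (v - Proj v) := by
    have hv : Proj v + (v - Proj v) = v := by abel
    have : a v v = a (Proj v + (v - Proj v)) (Proj v + (v - Proj v)) := by rw [hv]
    simp only [map_add, LinearMap.add_apply, hcross, hcross'] at this
    linarith
  have hK := hker v
  have h1 := hlow _ hK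
  have h2 := hupp _ hK
  have haP := ha_pos (Proj v)
  have haQ := ha_pos (v - Proj v)
  have hm : min 1 c₀ ≤ 1 := min_le_left _ _
  have hm' : min 1 c₀ ≤ c₀ := min_le_right _ _
  have hM : (1:ℝ) ≤ max 1 c₁ := le_max_left _ _
  have hM' : c₁ ≤ max 1 c₁ := le_max_right _ _
  constructor <;> rw [hdecomp] <;> nlinarith
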